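/- Let I and J be finite index sets, pᵢ, qⱼ ∈ [0,1] with ∑_{i∈I} pᵢ = 1 = ∑_{j∈J} qⱼ, and let μᵢ, νⱼ be finitely supported probability distributions on a set X such that ⊕_{i∈I} pᵢ·μᵢ = ⊕_{j∈J} qⱼ·νⱼ (pointwise equal mixtures). Then there exist reals r_{ij} ≥ 0 and distributions ϱ_{ij} ∈ Distr(X) such that for all i ∈ I: ∑_{j∈J} r_{ij} = pᵢ and pᵢ·μᵢ = ⊕_{j∈J} r_{ij}·ϱ_{ij} (pointwise), and for all j ∈ J: ∑_{i∈I} r_{ij} = qⱼ and qⱼ·νⱼ = ⊕_{i∈I} r_{ij}·ϱ_{ij}. -/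

import Mathlib

/-- A finitely supported probability distribution on `X`. -/
def IsDistr {X : Type*} (μ : X → ℝ) : Prop :=
  (∀ x, 0 ≤ μ x) ∧ (Function.support μ).Finite ∧ ∑ᶠ x, μ x = 1

/-- common refinement of two convex decompositions:
if `⊕_{i∈I} pᵢ·μᵢ = ⊕_{j∈J} qⱼ·νⱼ` pointwise, then there are `r_{ij} ≥ 0` and
distributions `ϱ_{ij}` with `∑_j r_{ij} = pᵢ`, `pᵢ·μᵢ = ⊕_j r_{ij}·ϱ_{ij}`,
`∑_i r_{ij} = qⱼ` and `qⱼ·νⱼ = ⊕_i r_{ij}·ϱ_{ij}`. -/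
theorem common_refinement {X : Type*} {I J : Type*} [Fintype I] [Fintype J]
    (p : I → ℝ) (q : J → ℝ) (μ : I → X → ℝ) (ν : J → X → ℝ)
    (hp : ∀ i, 0 ≤ p i ∧ p i ≤ 1) (hq : ∀ j, 0 ≤ q j ∧ q j ≤ 1)
    (hp1 : ∑ i, p i = 1) (hq1 : ∑ j, q j = 1)
    (hμ : ∀ i, IsDistr (μ i)) (hν : ∀ j, IsDistr (ν j))
    (heq : ∀ x, ∑ i, p i * μ i x = ∑ j, q j * ν j x) :
    ∃ (r : I → J → ℝ) (ρ : I → J → X → ℝ),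
      (∀ i j, 0 ≤ r i j) ∧ (∀ i j, IsDistr (ρ i j)) ∧
      (∀ i, ∑ j, r i j = p i) ∧
      (∀ i x, p i * μ i x = ∑ j, r i j * ρ i j x) ∧
      (∀ j, ∑ i, r i j = q j) ∧
      (∀ j x, q j * ν j x = ∑ i, r i j * ρ i j x) := by
  classical
  set S : X → ℝ := fun x => ∑ i, p i * μ i x with hSdef
  have hSnn : ∀ x, 0 ≤ S x := fun x =>
    Finset.sum_nonneg fun i _ => mul_nonneg (hp i).1 ((hμ i).1 x)
  set f : I → J → X → ℝ := fun i j x => p i * μ i x * (q j * ν j x) / S x with hfdef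
  have hfnn : ∀ i j x, 0 ≤ f i j x := fun i j x =>
    div_nonneg (mul_nonneg (mul_nonneg (hp i).1 ((hμ i).1 x))
      (mul_nonneg (hq j).1 ((hν j).1 x))) (hSnn x)
  have hμ0 : ∀ i x, S x = 0 → p i * μ i x = 0 := by
    intro i x h
    exact (Finset.sum_eq_zero_iff_of_nonneg
      (fun i _ => mul_nonneg (hp i).1 ((hμ i).1 x))).mp h i (Finset.mem_univ i)
  have hν0 : ∀ j x, S x = 0 → q j * ν j x = 0 := by
    intro j x h
    have h' : ∑ j, q j * ν j x = 0 := by rw [← heq x]; exact h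
    exact (Finset.sum_eq_zero_iff_of_nonneg
      (fun j _ => mul_nonneg (hq j).1 ((hν j).1 x))).mp h' j (Finset.mem_univ j)
  -- pointwise marginals of f
  have hA : ∀ i x, ∑ j, f i j x = p i * μ i x := by
    intro i x
    by_cases h : S x = 0
    · simp only [hfdef, h, div_zero, Finset.sum_const_zero]
      exact (hμ0 i x h).symm
    · have : ∑ j, f i j x = p i * μ i x * (∑ j, q j * ν j x) / S x := by
        simp only [Finset.mul_sum, Finset.sum_div]
        rfl
      rw [this, ← heq x]
      exact mul_div_cancel_right₀ _ h
  have hB : ∀ j x, ∑ i, f i j x = q j * ν j x := by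
    intro j x
    by_cases h : S x = 0
    · simp only [hfdef, h, div_zero, Finset.sum_const_zero]
      exact (hν0 j x h).symm
    · have : ∑ i, f i j x = (∑ i, p i * μ i x) * (q j * ν j x) / S x := by
        simp only [Finset.sum_mul, Finset.sum_div]
        rfl
      rw [this]
      exact mul_div_cancel_left₀ _ h
  -- common finite support
  have hfin : ((⋃ i, Function.support (μ i)) ∪ ⋃ j, Function.support (ν j)).Finite :=
    ((Set.finite_iUnion fun i => (hμ i).2.1).union (Set.finite_iUnion fun j => (hν j).2.1))
  set s : Finset X := hfin.toFinset with hsdef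
  have hμsub : ∀ i, Function.support (μ i) ⊆ ↑s := by
    intro i x hx
    simp only [hsdef, Set.Finite.coe_toFinset]
    exact Or.inl (Set.mem_iUnion.mpr ⟨i, hx⟩)
  have hνsub : ∀ j, Function.support (ν j) ⊆ ↑s := by
    intro j x hx
    simp only [hsdef, Set.Finite.coe_toFinset]
    exact Or.inr (Set.mem_iUnion.mpr ⟨j, hx⟩)
  have hfsub : ∀ i j, Function.support (f i j) ⊆ Function.support (μ i) := by
    intro i j x hx
    simp only [Function.mem_support] at hx ⊢
    intro h
    apply hx
    simp [hfdef, h]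
  have hμsum : ∀ i, ∑ x ∈ s, μ i x = 1 := by
    intro i
    rw [← finsum_eq_sum_of_support_subset _ (hμsub i)]
    exact (hμ i).2.2
  have hνsum : ∀ j, ∑ x ∈ s, ν j x = 1 := by
    intro j
    rw [← finsum_eq_sum_of_support_subset _ (hνsub j)]
    exact (hν j).2.2
  set r : I → J → ℝ := fun i j => ∑ x ∈ s, f i j x with hrdef
  have hrnn : ∀ i j, 0 ≤ r i j := fun i j =>
    Finset.sum_nonneg fun x _ => hfnn i j x
  have hr0 : ∀ i j, r i j = 0 → ∀ x, f i j x = 0 := by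
    intro i j h x
    by_cases hx : x ∈ s
    · exact (Finset.sum_eq_zero_iff_of_nonneg (fun x _ => hfnn i j x)).mp h x hx
    · by_contra hc
      exact hx ((hμsub i) (hfsub i j hc))
  set ρ : I → J → X → ℝ := fun i j => if r i j = 0 then μ i else fun x => f i j x / r i j
    with hρdef
  have key : ∀ i j x, r i j * ρ i j x = f i j x := by
    intro i j x
    by_cases h : r i j = 0
    · simp [hρdef, h, hr0 i j h x]
    · simp only [hρdef, if_neg h]
      exact mul_div_cancel₀ _ h
  refine ⟨r, ρ, hrnn, ?_, ?_, ?_, ?_, ?_⟩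
  · intro i j
    by_cases h : r i j = 0
    · simpa [hρdef, h] using hμ i
    · have hrpos : 0 < r i j := lt_of_le_of_ne (hrnn i j) (Ne.symm h)
      refine ⟨fun x => ?_, ?_, ?_⟩
      · simp only [hρdef, if_neg h]
        exact div_nonneg (hfnn i j x) hrpos.le
      · apply Set.Finite.subset ((hμ i).2.1)
        intro x hx
        simp only [hρdef, if_neg h, Function.mem_support] at hx
        exact hfsub i j (fun hf => hx (by rw [hf, zero_div]))
      · have hsub : Function.support (ρ i j) ⊆ ↑s := by
          intro x hx
          simp only [hρdef, if_neg h, Function.mem_support] at hx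
          exact hμsub i (hfsub i j (fun hf => hx (by rw [hf, zero_div])))
        rw [finsum_eq_sum_of_support_subset _ hsub]
        simp only [hρdef, if_neg h]
        rw [← Finset.sum_div]
        exact div_self h
  · intro i
    have : ∑ j, r i j = ∑ x ∈ s, ∑ j, f i j x := Finset.sum_comm
    rw [this]
    calc ∑ x ∈ s, ∑ j, f i j x = ∑ x ∈ s, p i * μ i x := by
          exact Finset.sum_congr rfl fun x _ => hA i x
      _ = p i * ∑ x ∈ s, μ i x := by rw [Finset.mul_sum]
      _ = p i := by rw [hμsum i, mul_one]
  · intro i x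
    rw [← hA i x]
    exact Finset.sum_congr rfl fun j _ => (key i j x).symm
  · intro j
    have : ∑ i, r i j = ∑ x ∈ s, ∑ i, f i j x := Finset.sum_comm
    rw [this]
    calc ∑ x ∈ s, ∑ i, f i j x = ∑ x ∈ s, q j * ν j x := by
          exact Finset.sum_congr rfl fun x _ => hB j x
      _ = q j * ∑ x ∈ s, ν j x := by rw [Finset.mul_sum]
      _ = q j := by rw [hνsum j, mul_one]
  · intro j x
    rw [← hB j x]
    exact Finset.sum_congr rfl fun i _ => (key i j x).symm
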